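/- Let X be a random variable with values in ℝ^d and Y a random vector in ℝ^m with each Y_i square-integrable, on the same probability space, and λ > 0. For each i = 1,…,m let ξ_i : ℝ^d → ℝ be measurable with ξ_i(X) = 𝔼[Y_i | X] almost surely. Define E* : ℝ^d → ℝ^k (k ≥ m) by E*_i(x) = ξ_i(x) for i ≤ m and E*_i(x) = 0 for i > m, and let ν* be the law of (X, E*(X)) on ℝ^d × ℝ^k. Then for every measurable E : ℝ^d → ℝ^k with each E_i(X) square-integrable and every probability measure ν on ℝ^d × ℝ^k: KL(law(X, E(X)), ν) + λ·Σ_{i=1}^m 𝔼[(E_i(X) − Y_i)²] ≥ KL(law(X, E*(X)), ν*) + λ·Σ_{i=1}^m 𝔼[(ξ_i(X) − Y_i)²]. In particular (E*, ν*) is a global minimizer of the objective, and E* is disentangled w.r.t. ξ with g_i the identity. -/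

import Mathlib

open MeasureTheory ProbabilityTheory
open scoped Classical

/-- Kullback–Leibler divergence `KL(μ, ν) = ∫ log(dμ/dν) dμ`, equal to `+∞` when `μ` is not
absolutely continuous with respect to `ν` (or when the log-likelihood ratio is not integrable). -/
noncomputable def klDiv {α : Type*} [MeasurableSpace α] (μ ν : Measure α) : ENNReal :=
  if μ ≪ ν ∧ Integrable (llr μ ν) μ then ENNReal.ofReal (∫ x, llr μ ν x ∂μ) else ⊤

/-- KL divergence of a (sigma-finite) measure with itself vanishes. -/
lemma klDiv_self {α : Type*} [MeasurableSpace α] (μ : Measure α) [SigmaFinite μ] :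
    klDiv μ μ = 0 := by
  have hllr : llr μ μ =ᵐ[μ] 0 := by
    filter_upwards [μ.rnDeriv_self] with x hx
    simp [llr, hx]
  have hint : Integrable (llr μ μ) μ :=
    (integrable_congr hllr).mpr (integrable_zero _ _ _)
  have hI : ∫ x, llr μ μ x ∂μ = 0 := by
    rw [integral_congr_ae hllr]; simp
  rw [klDiv, if_pos ⟨Measure.AbsolutelyContinuous.rfl, hint⟩, hI, ENNReal.ofReal_zero]

/-- The product of two L² functions is integrable. -/
lemma integrable_mul_of_memL2 {Ω : Type*} [MeasurableSpace Ω] {μ : Measure Ω}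
    {f g : Ω → ℝ} (hf : MemLp f 2 μ) (hg : MemLp g 2 μ) :
    Integrable (fun ω => f ω * g ω) μ := by
  have h : Integrable (fun ω => (((f ω + g ω) ^ 2 - f ω ^ 2) - g ω ^ 2) / 2) μ :=
    (((hf.add hg).integrable_sq.sub hf.integrable_sq).sub hg.integrable_sq).div_const 2
  refine h.congr (Filter.Eventually.of_forall fun ω => ?_)
  ring

/-- The conditional expectation of an L² function is in L². -/
lemma memL2_condexp {Ω : Type*} {m' : MeasurableSpace Ω} [m0 : MeasurableSpace Ω]
    (hm : m' ≤ m0) (μ : Measure Ω) [IsProbabilityMeasure μ] {Z : Ω → ℝ}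
    (hZ : MemLp Z 2 μ) : MemLp (μ[Z|m']) 2 μ := by
  set g : Lp ℝ 2 μ := (condExpL2 ℝ ℝ hm (hZ.toLp Z) : Lp ℝ 2 μ) with hg
  have hae : (g : Ω → ℝ) =ᵐ[μ] μ[Z|m'] := by
    refine ae_eq_condExp_of_forall_setIntegral_eq hm (hZ.integrable one_le_two)
      (fun s _ hμs => integrableOn_condExpL2_of_measure_ne_top hm hμs.ne _)
      (fun s hs hμs => ?_) (aestronglyMeasurable_condExpL2 hm _)
    rw [integral_condExpL2_eq hm (hZ.toLp Z) hs hμs.ne]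
    exact setIntegral_congr_ae (hm s hs) ((hZ.coeFn_toLp).mono fun x hx _ => hx)
  exact (Lp.memLp g).ae_eq hae

/-- The conditional expectation minimizes the L² distance among `m'`-measurable functions. -/
lemma condexp_L2_min {Ω : Type*} {m' : MeasurableSpace Ω} [m0 : MeasurableSpace Ω]
    (hm : m' ≤ m0) (μ : Measure Ω) [IsProbabilityMeasure μ] {f c Z : Ω → ℝ}
    (hf : MemLp f 2 μ) (hfm : AEStronglyMeasurable[m'] f μ)
    (hZ : MemLp Z 2 μ) (hc : c =ᵐ[μ] μ[Z|m']) :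
    ∫ ω, (c ω - Z ω) ^ 2 ∂μ ≤ ∫ ω, (f ω - Z ω) ^ 2 ∂μ := by
  have hc2 : MemLp c 2 μ := (memL2_condexp hm μ hZ).ae_eq hc.symm
  have hcm : AEStronglyMeasurable[m'] c μ :=
    AEStronglyMeasurable.congr
      (stronglyMeasurable_condExp.aestronglyMeasurable) hc.symm
  have hFm : AEStronglyMeasurable[m'] (f - c) μ := hfm.sub hcm
  have hfc2 : MemLp (f - c) 2 μ := hf.sub hc2
  have hcZ2 : MemLp (fun ω => c ω - Z ω) 2 μ := hc2.sub hZ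
  have hint : Integrable ((f - c) * fun ω => c ω - Z ω) μ := by
    exact integrable_mul_of_memL2 hfc2 hcZ2
  have hcZint : Integrable (fun ω => c ω - Z ω) μ := hcZ2.integrable one_le_two
  have hcint : Integrable c μ := hc2.integrable one_le_two
  have hZint : Integrable Z μ := hZ.integrable one_le_two
  have hG0 : μ[fun ω => c ω - Z ω|m'] =ᵐ[μ] 0 := by
    have h1 : μ[fun ω => c ω - Z ω|m'] =ᵐ[μ] μ[c|m'] - μ[Z|m'] := condExp_sub hcint hZint m'
    have h2 : μ[c|m'] =ᵐ[μ] μ[μ[Z|m']|m'] := condExp_congr_ae hc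
    have h3 : μ[μ[Z|m']|m'] =ᵐ[μ] μ[Z|m'] := condExp_condExp_of_le le_rfl hm
    filter_upwards [h1, h2, h3] with ω h1 h2 h3
    simp [h1, Pi.sub_apply, h2, h3]
  have hpull : μ[(f - c) * fun ω => c ω - Z ω|m'] =ᵐ[μ] (f - c) * μ[fun ω => c ω - Z ω|m'] :=
    condExp_mul_of_aestronglyMeasurable_left hFm hint hcZint
  have hcross : ∫ ω, (f ω - c ω) * (c ω - Z ω) ∂μ = 0 := by
    have h1 : ∫ ω, (f ω - c ω) * (c ω - Z ω) ∂μ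
        = ∫ ω, (μ[(f - c) * fun ω => c ω - Z ω|m']) ω ∂μ := by
      rw [integral_condExp hm]
      exact integral_congr_ae (Filter.Eventually.of_forall fun ω => rfl)
    rw [h1]
    have h2 : (μ[(f - c) * fun ω => c ω - Z ω|m']) =ᵐ[μ] 0 := by
      filter_upwards [hpull, hG0] with ω h h0
      simp [h, Pi.mul_apply, h0]
    rw [integral_congr_ae h2]; simp
  have hfc_sq : Integrable (fun ω => (f ω - c ω) ^ 2) μ := by
    simpa using hfc2.integrable_sq
  have hcZ_sq : Integrable (fun ω => (c ω - Z ω) ^ 2) μ := hcZ2.integrable_sq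
  have hcross_int : Integrable (fun ω => 2 * ((f ω - c ω) * (c ω - Z ω))) μ := by
    have := hint.const_mul 2
    simpa [Pi.mul_apply, Pi.sub_apply, mul_assoc] using this
  have hdecomp : ∫ ω, (f ω - Z ω) ^ 2 ∂μ
      = ∫ ω, (f ω - c ω) ^ 2 ∂μ + (∫ ω, 2 * ((f ω - c ω) * (c ω - Z ω)) ∂μ
          + ∫ ω, (c ω - Z ω) ^ 2 ∂μ) := by
    have hAB : Integrable
        (fun ω => (f ω - c ω) ^ 2 + 2 * ((f ω - c ω) * (c ω - Z ω))) μ :=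
      hfc_sq.add hcross_int
    have heq : ∫ ω, (f ω - Z ω) ^ 2 ∂μ
        = ∫ ω, (((f ω - c ω) ^ 2
            + 2 * ((f ω - c ω) * (c ω - Z ω))) + (c ω - Z ω) ^ 2) ∂μ :=
      integral_congr_ae (Filter.Eventually.of_forall fun ω => by ring)
    have e1 : ∫ ω, (((f ω - c ω) ^ 2
            + 2 * ((f ω - c ω) * (c ω - Z ω))) + (c ω - Z ω) ^ 2) ∂μ
        = ∫ ω, ((f ω - c ω) ^ 2 + 2 * ((f ω - c ω) * (c ω - Z ω))) ∂μ
          + ∫ ω, (c ω - Z ω) ^ 2 ∂μ := integral_add hAB hcZ_sq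
    have e2 : ∫ ω, ((f ω - c ω) ^ 2 + 2 * ((f ω - c ω) * (c ω - Z ω))) ∂μ
        = ∫ ω, (f ω - c ω) ^ 2 ∂μ + ∫ ω, 2 * ((f ω - c ω) * (c ω - Z ω)) ∂μ :=
      integral_add hfc_sq hcross_int
    rw [heq, e1, e2]; ring
  have h2cross : ∫ ω, 2 * ((f ω - c ω) * (c ω - Z ω)) ∂μ = 0 := by
    rw [integral_const_mul, hcross, mul_zero]
  have hnn : 0 ≤ ∫ ω, (f ω - c ω) ^ 2 ∂μ :=
    integral_nonneg fun ω => sq_nonneg _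
  linarith [hdecomp, h2cross, hnn]

/-- Theorem 1 of the paper, L2 case. With `E*_i = ξ_i` a version of `𝔼[Y_i|X]`
for `i ≤ m` (and `0` otherwise) and `ν*` the law of `(X, E*(X))`, the pair `(E*, ν*)` is a global
minimizer of `KL(law(X,E(X)), ν) + λ·Σᵢ 𝔼[(Eᵢ(X) − Yᵢ)²]`; in particular `E*` is disentangled
w.r.t. `ξ` with `g_i` the identity. -/
theorem DEAR_identifiability_L2
    {Ω : Type*} [MeasurableSpace Ω] (μ : Measure Ω) [IsProbabilityMeasure μ]
    {d m k : ℕ} (hmk : m ≤ k)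
    (X : Ω → (Fin d → ℝ)) (hX : Measurable X)
    (Y : Ω → (Fin m → ℝ)) (hY : Measurable Y)
    (hY2 : ∀ i : Fin m, MemLp (fun ω => Y ω i) 2 μ)
    (lam : ℝ) (hlam : 0 < lam)
    (ξ : Fin m → (Fin d → ℝ) → ℝ) (hξ : ∀ i, Measurable (ξ i))
    (hcond : ∀ i, (fun ω => ξ i (X ω))
      =ᵐ[μ] μ[fun ω => Y ω i | MeasurableSpace.comap X inferInstance])
    (Estar : (Fin d → ℝ) → (Fin k → ℝ))
    (hEstar : ∀ x (i : Fin k),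
      Estar x i = if h : (i : ℕ) < m then ξ ⟨i, h⟩ x else 0) :
    (∀ (E : (Fin d → ℝ) → (Fin k → ℝ)), Measurable E →
      (∀ i : Fin m, MemLp (fun ω => E (X ω) (Fin.castLE hmk i)) 2 μ) →
      ∀ (ν : Measure ((Fin d → ℝ) × (Fin k → ℝ))), IsProbabilityMeasure ν →
        klDiv (Measure.map (fun ω => (X ω, Estar (X ω))) μ)
            (Measure.map (fun ω => (X ω, Estar (X ω))) μ)
          + ENNReal.ofReal
              (lam * ∑ i : Fin m, ∫ ω, (ξ i (X ω) - Y ω i) ^ 2 ∂μ)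
        ≤ klDiv (Measure.map (fun ω => (X ω, E (X ω))) μ) ν
          + ENNReal.ofReal
              (lam * ∑ i : Fin m, ∫ ω, (E (X ω) (Fin.castLE hmk i) - Y ω i) ^ 2 ∂μ))
    ∧ ∀ i : Fin m, Function.Injective (id : ℝ → ℝ)
        ∧ ∀ x, Estar x (Fin.castLE hmk i) = id (ξ i x) := by
  constructor
  · intro E hE hE2 ν hν
    -- the KL term on the left is zero
    have hEstar_meas : Measurable Estar := by
      refine measurable_pi_lambda _ fun i => ?_
      simp only [hEstar]
      by_cases h : (i : ℕ) < m
      · simpa [h] using hξ ⟨i, h⟩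
      · simpa [h] using measurable_const
    have hmap_meas : Measurable fun ω => (X ω, Estar (X ω)) :=
      hX.prodMk (hEstar_meas.comp hX)
    haveI : IsProbabilityMeasure (Measure.map (fun ω => (X ω, Estar (X ω))) μ) :=
      Measure.isProbabilityMeasure_map hmap_meas.aemeasurable
    rw [klDiv_self, zero_add]
    -- it suffices to compare the L² terms
    refine le_add_left (ENNReal.ofReal_le_ofReal ?_)
    refine mul_le_mul_of_nonneg_left (Finset.sum_le_sum fun i _ => ?_) hlam.le
    -- per-coordinate L² minimality of the conditional expectation
    have hm : MeasurableSpace.comap X inferInstance ≤ ‹MeasurableSpace Ω› := hX.comap_le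
    have hfmeas : Measurable[MeasurableSpace.comap X inferInstance]
        fun ω => E (X ω) (Fin.castLE hmk i) :=
      ((measurable_pi_apply _).comp hE).comp (comap_measurable X)
    have hfm : AEStronglyMeasurable[MeasurableSpace.comap X inferInstance]
        (fun ω => E (X ω) (Fin.castLE hmk i)) μ :=
      (hfmeas.stronglyMeasurable).aestronglyMeasurable
    exact condexp_L2_min hm μ (hE2 i) hfm (hY2 i) (hcond i)
  · intro i
    refine ⟨fun a b h => h, fun x => ?_⟩
    have hi : ((Fin.castLE hmk i : Fin k) : ℕ) < m := by
      simpa using i.isLt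
    rw [hEstar x (Fin.castLE hmk i), dif_pos hi]
    simp
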